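/- If q is a positive divisor of a positive integer f, then N_q ≤ N_f, where N_k denotes the number of numerical semigroups with Frobenius number k. -/
import Mathlib


/-- A numerical semigroup: a cofinite additive submonoid of ℕ containing 0. -/
structure NumericalSemigroup where
  carrier : Set ℕ
  zero_mem : 0 ∈ carrier
  add_mem : ∀ ⦃a b : ℕ⦄, a ∈ carrier → b ∈ carrier → a + b ∈ carrier
  cofinite : (carrierᶜ : Set ℕ).Finite

namespace NumericalSemigroup

/-- The primitives (minimal generators): nonzero elements not expressible as a sum
of two nonzero elements. -/
def primitives (S : NumericalSemigroup) : Set ℕ :=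
  {x | x ∈ S.carrier ∧ x ≠ 0 ∧
    ¬ ∃ a b : ℕ, a ∈ S.carrier ∧ b ∈ S.carrier ∧ a ≠ 0 ∧ b ≠ 0 ∧ x = a + b}

/-- The maximum primitive. -/
noncomputable def maxPrim (S : NumericalSemigroup) : ℕ := sSup (primitives S)

/-- The multiplicity: the least primitive (= least nonzero element). -/
noncomputable def multiplicity (S : NumericalSemigroup) : ℕ := sInf (primitives S)

/-- The Frobenius number: the largest gap (0 for ℕ by convention here). -/
noncomputable def frob (S : NumericalSemigroup) : ℕ := sSup (S.carrierᶜ)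

/-- The set of left elements. -/
noncomputable def lefts (S : NumericalSemigroup) : Set ℕ := S.carrier ∩ Set.Iio (frob S)

/-- The extended set of left elements. -/
noncomputable def extLefts (S : NumericalSemigroup) : Set ℕ := lefts S ∪ {frob S}

end NumericalSemigroup

open NumericalSemigroup

/-- The gcd of a set of naturals: the greatest common divisor of all its elements. -/
noncomputable def setGcd (A : Set ℕ) : ℕ := sSup {d | ∀ x ∈ A, d ∣ x}

/-- The number of numerical semigroups with maximum primitive `n`. -/
noncomputable def countMaxPrim (n : ℕ) : ℕ :=
  {S : NumericalSemigroup | maxPrim S = n}.ncard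

/-- The number of numerical semigroups with Frobenius number `n`. -/
noncomputable def countFrob (n : ℕ) : ℕ :=
  {S : NumericalSemigroup | frob S = n}.ncard

section Aux

lemma NumericalSemigroup.ext' {S T : NumericalSemigroup} (h : S.carrier = T.carrier) :
    S = T := by
  cases S; cases T; simp_all

lemma mem_of_frob_lt {S : NumericalSemigroup} {k n : ℕ} (hS : frob S = k) (hn : k < n) :
    n ∈ S.carrier := by
  by_contra h
  have : n ≤ frob S := le_csSup S.cofinite.bddAbove h
  omega

lemma frob_not_mem {S : NumericalSemigroup} {k : ℕ} (hS : frob S = k) (hk : 0 < k) :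
    k ∉ S.carrier := by
  have hne : (S.carrierᶜ).Nonempty := by
    by_contra h
    rw [Set.not_nonempty_iff_eq_empty] at h
    have : frob S = 0 := by simp [frob, h]
    omega
  have h2 : frob S ∈ S.carrierᶜ := Nat.sSup_mem hne S.cofinite.bddAbove
  rw [hS] at h2
  exact h2

lemma frobSet_finite (f : ℕ) : {S : NumericalSemigroup | frob S = f}.Finite := by
  apply Set.Finite.of_finite_image (f := fun S => S.carrier ∩ Set.Iic f)
  · apply Set.Finite.subset (Set.finite_Iic f).finite_subsets
    rintro A ⟨S, _, rfl⟩
    exact Set.inter_subset_right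
  · intro S hS T hT hST'
    have hST : S.carrier ∩ Set.Iic f = T.carrier ∩ Set.Iic f := hST'
    apply NumericalSemigroup.ext'
    ext x
    rcases le_or_gt x f with h | h
    · constructor
      · intro hx
        have : x ∈ T.carrier ∩ Set.Iic f := hST ▸ ⟨hx, h⟩
        exact this.1
      · intro hx
        have : x ∈ S.carrier ∩ Set.Iic f := hST.symm ▸ ⟨hx, h⟩
        exact this.1
    · exact ⟨fun _ => mem_of_frob_lt hT h, fun _ => mem_of_frob_lt hS h⟩

/-- Scale a numerical semigroup by `m` and fill in everything above `f`. -/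
noncomputable def scaleUp (m f : ℕ) (S : NumericalSemigroup) : NumericalSemigroup where
  carrier := {x | (∃ s ∈ S.carrier, x = m * s) ∨ f < x}
  zero_mem := Or.inl ⟨0, S.zero_mem, (mul_zero m).symm⟩
  add_mem := by
    rintro a b (⟨s, hs, rfl⟩ | ha) (⟨t, ht, rfl⟩ | hb)
    · exact Or.inl ⟨s + t, S.add_mem hs ht, (mul_add m s t).symm⟩
    · exact Or.inr (lt_of_lt_of_le hb (Nat.le_add_left _ _))
    · exact Or.inr (lt_of_lt_of_le ha (Nat.le_add_right _ _))
    · exact Or.inr (lt_of_lt_of_le ha (Nat.le_add_right _ _))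
  cofinite := by
    apply (Set.finite_Iic f).subset
    intro x hx
    simp only [Set.mem_compl_iff, Set.mem_setOf_eq, not_or, not_lt] at hx
    exact hx.2

lemma scaleUp_frob {m f q : ℕ} (hm : 0 < m) (hmq : m * q = f) (hq : 0 < q)
    {S : NumericalSemigroup} (hS : frob S = q) : frob (scaleUp m f S) = f := by
  have hqS : q ∉ S.carrier := frob_not_mem hS hq
  have hfmem : f ∈ (scaleUp m f S).carrierᶜ := by
    rintro (⟨s, hs, hfs⟩ | hlt)
    · have : q = s := Nat.eq_of_mul_eq_mul_left hm (hmq.trans hfs)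
      exact hqS (this ▸ hs)
    · exact lt_irrefl f hlt
  have hsub : (scaleUp m f S).carrierᶜ ⊆ Set.Iic f := by
    intro x hx
    simp only [Set.mem_compl_iff, scaleUp, Set.mem_setOf_eq, not_or, not_lt] at hx
    exact hx.2
  refine le_antisymm (csSup_le ⟨f, hfmem⟩ fun x hx => hsub hx) ?_
  exact le_csSup ((Set.finite_Iic f).subset hsub).bddAbove hfmem

lemma scaleUp_inj_aux {m f q : ℕ} (hm : 0 < m) (hmq : m * q = f)
    {S T : NumericalSemigroup} (hT : frob T = q)
    (h : (scaleUp m f S).carrier ⊆ (scaleUp m f T).carrier) : S.carrier ⊆ T.carrier := by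
  intro x hx
  rcases le_or_gt x q with hxq | hxq
  · have : m * x ∈ (scaleUp m f T).carrier := h (Or.inl ⟨x, hx, rfl⟩)
    rcases this with ⟨s, hs, hxs⟩ | hlt
    · have : x = s := Nat.eq_of_mul_eq_mul_left hm hxs
      exact this ▸ hs
    · have : m * x ≤ f := hmq ▸ Nat.mul_le_mul_left m hxq
      omega
  · exact mem_of_frob_lt hT hxq

end Aux

theorem countFrob_divisor_le (f q : ℕ) (hf : 0 < f) (hq : 0 < q) (hdvd : q ∣ f) :
    countFrob q ≤ countFrob f := by
  obtain ⟨m, rfl⟩ := hdvd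
  have hm : 0 < m := Nat.pos_of_ne_zero (by rintro rfl; simp at hf)
  have hmq : m * q = q * m := Nat.mul_comm m q
  refine Set.ncard_le_ncard_of_injOn (fun S => scaleUp m (q * m) S) ?_ ?_ (frobSet_finite (q * m))
  · intro S hS
    exact scaleUp_frob hm hmq hq hS
  · intro S hS T hT hST
    have h := congrArg NumericalSemigroup.carrier hST
    exact NumericalSemigroup.ext' (le_antisymm
      (scaleUp_inj_aux hm hmq hT (le_of_eq h))
      (scaleUp_inj_aux hm hmq hS (le_of_eq h.symm)))
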